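/- If the auction system is β-KL-expressive and there is only one slot to display ads (w_1 > 0 and w_k = 0 for all k ≥ 2), then in the full-information setting, for every conservative pure Nash equilibrium b of the PBM-GSP mechanism, SW(𝔳) ≤ (1/β) · SW(b), where 𝔳 is the truthful keyword-bid profile. -/

import Mathlib

open Finset MeasureTheory

noncomputable section

namespace PBM

attribute [local instance] Classical.propDecidable

/-- 0-indexed rank of advertiser `i` among the advertisers with a positive bid
(higher bid first, ties broken by smaller index). -/
def rank {n : ℕ} (bs : Fin n → ℝ) (i : Fin n) : ℕ :=
  (Finset.univ.filter fun j => 0 < bs j ∧ (bs i < bs j ∨ (bs j = bs i ∧ j < i))).card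

/-- 0-indexed rank of `i` among all coordinates of `x` (decreasing, ties by index). -/
def rankAll {n : ℕ} (x : Fin n → ℝ) (i : Fin n) : ℕ :=
  (Finset.univ.filter fun j => x i < x j ∨ (x j = x i ∧ j < i)).card

/-- click probability of the slot obtained by `i` (0 if `i` places no positive bid). -/
def slotW {n : ℕ} (w : ℕ → ℝ) (bs : Fin n → ℝ) (i : Fin n) : ℝ :=
  if 0 < bs i then w (rank bs i) else 0

/-- GSP per-click payment of `i`: the bid of the advertiser ranked right below `i`
(0 if there is none). -/
def pay {n : ℕ} (bs : Fin n → ℝ) (i : Fin n) : ℝ :=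
  ∑ j ∈ Finset.univ.filter (fun j => 0 < bs j ∧ rank bs j = rank bs i + 1), bs j

/-- utility of bidder `i` in the single-keyword GSP game with values `vv`. -/
def gspUtil {n : ℕ} (w : ℕ → ℝ) (vv : Fin n → ℝ) (bs : Fin n → ℝ) (i : Fin n) : ℝ :=
  slotW w bs i * (vv i - pay bs i)

variable {Q S : Type*} [Fintype Q] [Fintype S]

/-- expected value of keyword `s` for an advertiser with per-query valuations `vq`. -/
def kwVal (P : Q → ℝ) (pi : Q → S → ℝ) (vq : Q → ℝ) (s : S) : ℝ :=
  (∑ q, pi q s * vq q * P q) / (∑ q, pi q s * P q)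

/-- probability mass of keyword `s`. -/
def mass (P : Q → ℝ) (pi : Q → S → ℝ) (s : S) : ℝ := ∑ q, pi q s * P q

/-- expected utility of advertiser `i` in PBM-GSP. -/
def util {n : ℕ} (P : Q → ℝ) (pi : Q → S → ℝ) (w : ℕ → ℝ)
    (v : Fin n → Q → ℝ) (b : Fin n → S → ℝ) (i : Fin n) : ℝ :=
  ∑ q, P q * ∑ s, pi q s *
    (slotW w (fun j => b j s) i * (v i q - pay (fun j => b j s) i))

/-- social welfare of bid profile `b` in PBM-GSP. -/
def SW {n : ℕ} (P : Q → ℝ) (pi : Q → S → ℝ) (w : ℕ → ℝ)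
    (v : Fin n → Q → ℝ) (b : Fin n → S → ℝ) : ℝ :=
  ∑ q, P q * ∑ s, pi q s * ∑ i, slotW w (fun j => b j s) i * v i q

/-- optimal social welfare. -/
def SWopt {n : ℕ} (P : Q → ℝ) (w : ℕ → ℝ) (v : Fin n → Q → ℝ) : ℝ :=
  ∑ q, P q * ∑ i, w (rankAll (fun j => v j q) i) * v i q

/-- welfare of the truthful keyword-bid profile `𝔳` (each advertiser bids his
expected keyword value on every keyword, no `κ` constraint). -/
def SWtruth {n : ℕ} (P : Q → ℝ) (pi : Q → S → ℝ) (w : ℕ → ℝ)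
    (v : Fin n → Q → ℝ) : ℝ :=
  ∑ q, P q * ∑ s, pi q s *
    ∑ i, w (rankAll (fun j => kwVal P pi (v j) s) i) * kwVal P pi (v i) s

/-- a bid vector is valid if it is nonnegative and positive on at most `κ` keywords. -/
def ValidBid (κ : ℕ) (bi : S → ℝ) : Prop :=
  (∀ s, 0 ≤ bi s) ∧ ((Finset.univ.filter fun s => 0 < bi s).card ≤ κ)

/-- a bid profile is conservative if everybody bids at most his expected keyword value. -/
def Conservative {n : ℕ} (P : Q → ℝ) (pi : Q → S → ℝ)
    (v : Fin n → Q → ℝ) (b : Fin n → S → ℝ) : Prop :=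
  ∀ i s, b i s ≤ kwVal P pi (v i) s

/-- `β`-keyword-level expressiveness for valuation profile `v`. -/
def KLExpressive {n : ℕ} (pi : Q → S → ℝ) (v : Fin n → Q → ℝ) (κ : ℕ) (β : ℝ) : Prop :=
  ∀ i : Fin n,
    β * ((Finset.univ.filter fun s : S => ∃ q, 0 < pi q s ∧ 0 < v i q).card : ℝ) ≤ (κ : ℝ)

/-- expected utility of advertiser `i` in PBM-GSP with reserve price vector `r`. -/
def utilR {n : ℕ} (P : Q → ℝ) (pi : Q → S → ℝ) (w : ℕ → ℝ) (r : S → ℝ)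
    (v : Fin n → Q → ℝ) (b : Fin n → S → ℝ) (i : Fin n) : ℝ :=
  ∑ q, P q * ∑ s, pi q s *
    (if 0 < b i s ∧ r s ≤ b i s then
       w (rank (fun j => b j s) i) * (v i q - max (r s) (pay (fun j => b j s) i))
     else 0)

/-- revenue of PBM-GSP with reserve price vector `r`. -/
def revenue {n : ℕ} (P : Q → ℝ) (pi : Q → S → ℝ) (w : ℕ → ℝ) (r : S → ℝ)
    (b : Fin n → S → ℝ) : ℝ :=
  ∑ q, P q * ∑ s, pi q s * ∑ i,
    (if 0 < b i s ∧ r s ≤ b i s then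
       w (rank (fun j => b j s) i) * max (r s) (pay (fun j => b j s) i)
     else 0)

/-- reserve-restricted social welfare of PBM-GSP with reserve price vector `r`. -/
def SWres {n : ℕ} (P : Q → ℝ) (pi : Q → S → ℝ) (w : ℕ → ℝ) (r : S → ℝ)
    (v : Fin n → Q → ℝ) (b : Fin n → S → ℝ) : ℝ :=
  ∑ q, P q * ∑ s, pi q s * ∑ i,
    (if 0 < b i s ∧ r s ≤ b i s then w (rank (fun j => b j s) i) * v i q else 0)

/-- marginal CDF on keyword `s` of a distribution `T` of keyword-valuation vectors. -/
def cdfT (T : Measure (S → ℝ)) (s : S) (x : ℝ) : ℝ :=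
  ((T.map fun f => f s) (Set.Iic x)).toReal

/-- the virtual value function `φ_s(x) = x - (1 - T_s(x))/t_s(x)`. -/
def virt (T : Measure (S → ℝ)) (td : S → ℝ → ℝ) (s : S) (x : ℝ) : ℝ :=
  x - (1 - cdfT T s x) / td s x

/-- `td s` is the density of the marginal of `T` on keyword `s`. -/
def HasDensity (T : Measure (S → ℝ)) (td : S → ℝ → ℝ) : Prop :=
  ∀ s : S, T.map (fun f => f s)
    = MeasureTheory.volume.withDensity (fun x => ENNReal.ofReal (td s x))

/-- `r` is the vector of Myerson reserve prices. -/
def MyersonReserve (T : Measure (S → ℝ)) (td : S → ℝ → ℝ) (r : S → ℝ) : Prop :=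
  ∀ s : S, 0 ≤ r s ∧ virt T td s (r s) = 0

/-- `T` is an MHR distribution with bounded derivative `η`. -/
def MHRBounded (T : Measure (S → ℝ)) (td : S → ℝ → ℝ) (r : S → ℝ) (η : ℝ) : Prop :=
  ∀ s : S, (∀ x : ℝ, 0 ≤ x → DifferentiableAt ℝ (virt T td s) x) ∧
    (∀ x : ℝ, 0 ≤ x → 1 ≤ deriv (virt T td s) x) ∧
    (∀ x : ℝ, r s ≤ x → deriv (virt T td s) x ≤ η)

/-- `T` has a monotone hazard rate. -/
def MHRhazard (T : Measure (S → ℝ)) (td : S → ℝ → ℝ) : Prop :=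
  ∀ s : S, MonotoneOn (fun x => td s x / (1 - cdfT T s x))
    {x : ℝ | 0 ≤ x ∧ cdfT T s x < 1}

/-- expected revenue (per valuation profile) of PBM-VCG with reserve prices, via
Myerson's lemma: virtual-value surplus of the welfare-maximizing allocation. -/
def revVCG {n : ℕ} (P : Q → ℝ) (pi : Q → S → ℝ) (w : ℕ → ℝ)
    (T : Measure (S → ℝ)) (td : S → ℝ → ℝ) (v : Fin n → Q → ℝ) : ℝ :=
  ∑ s, mass P pi s * ∑ i, w (rankAll (fun j => kwVal P pi (v j) s) i) *
    (if 0 < virt T td s (kwVal P pi (v i) s) then virt T td s (kwVal P pi (v i) s) else 0)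


section Aux
variable {n : ℕ}

/-- `i` beats `j`: strictly higher bid, or equal bid and smaller index. -/
def bts (x : Fin n → ℝ) (i j : Fin n) : Prop := x j < x i ∨ (x i = x j ∧ i < j)

lemma bts_irrefl (x : Fin n → ℝ) (i : Fin n) : ¬ bts x i i := by
  simp [bts]

lemma bts_total (x : Fin n → ℝ) {i j : Fin n} (h : i ≠ j) : bts x i j ∨ bts x j i := by
  rcases lt_trichotomy (x i) (x j) with h1 | h1 | h1
  · exact Or.inr (Or.inl h1)
  · rcases lt_or_gt_of_ne h with h2 | h2
    · exact Or.inl (Or.inr ⟨h1, h2⟩)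
    · exact Or.inr (Or.inr ⟨h1.symm, h2⟩)
  · exact Or.inl (Or.inl h1)

lemma bts_le {x : Fin n → ℝ} {i j : Fin n} (h : bts x i j) : x j ≤ x i := by
  rcases h with h | ⟨h, _⟩
  · exact h.le
  · exact h.ge

lemma bts_trans {x : Fin n → ℝ} {i j k : Fin n} (h1 : bts x i j) (h2 : bts x j k) :
    bts x i k := by
  rcases h1 with h1 | ⟨e1, l1⟩ <;> rcases h2 with h2 | ⟨e2, l2⟩
  · exact Or.inl (h2.trans h1)
  · exact Or.inl (e2 ▸ h1)
  · exact Or.inl (lt_of_lt_of_le h2 e1.ge)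
  · exact Or.inr ⟨e1.trans e2, l1.trans l2⟩

lemma rank_eq (bs : Fin n → ℝ) (i : Fin n) :
    rank bs i = (Finset.univ.filter fun j => 0 < bs j ∧ bts bs j i).card := by
  unfold rank bts
  congr!

lemma rankAll_eq (x : Fin n → ℝ) (i : Fin n) :
    rankAll x i = (Finset.univ.filter fun j => bts x j i).card := by
  unfold rankAll bts
  congr!

lemma rank_lt {bs : Fin n → ℝ} {i j : Fin n} (hi : 0 < bs i) (hj : 0 < bs j)
    (hb : bts bs i j) : rank bs i < rank bs j := by
  rw [rank_eq, rank_eq]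
  apply Finset.card_lt_card
  constructor
  · intro k hk
    simp only [Finset.mem_filter, Finset.mem_univ, true_and] at hk ⊢
    exact ⟨hk.1, bts_trans hk.2 hb⟩
  · intro hsub
    have := hsub (by simp only [Finset.mem_filter, Finset.mem_univ, true_and]; exact ⟨hi, hb⟩)
    simp only [Finset.mem_filter, Finset.mem_univ, true_and] at this
    exact bts_irrefl bs i this.2

lemma rank_zero_not_beaten {bs : Fin n → ℝ} {i : Fin n} (hr : rank bs i = 0) :
    ∀ j, ¬ (0 < bs j ∧ bts bs j i) := by
  intro j hj
  have : j ∈ Finset.univ.filter fun j => 0 < bs j ∧ bts bs j i := by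
    simp only [Finset.mem_filter, Finset.mem_univ, true_and]; exact hj
  rw [rank_eq] at hr
  rw [Finset.card_eq_zero.mp hr] at this
  exact absurd this (Finset.notMem_empty j)

lemma rank_zero_max {bs : Fin n → ℝ} {i : Fin n} (hr : rank bs i = 0) {j : Fin n}
    (hj : 0 < bs j) : bs j ≤ bs i := by
  by_contra h
  exact rank_zero_not_beaten hr j ⟨hj, Or.inl (lt_of_not_ge h)⟩

lemma rank_zero_unique {bs : Fin n → ℝ} {i j : Fin n} (hi : 0 < bs i) (hj : 0 < bs j)
    (hri : rank bs i = 0) (hrj : rank bs j = 0) : i = j := by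
  by_contra h
  rcases bts_total bs h with hb | hb
  · exact rank_zero_not_beaten hrj i ⟨hi, hb⟩
  · exact rank_zero_not_beaten hri j ⟨hj, hb⟩

lemma rankAll_zero_unique {x : Fin n → ℝ} {i j : Fin n}
    (hri : rankAll x i = 0) (hrj : rankAll x j = 0) : i = j := by
  by_contra h
  have key : ∀ k l : Fin n, rankAll x l = 0 → ¬ bts x k l := by
    intro k l hl hb
    have : k ∈ Finset.univ.filter fun j => bts x j l := by simp [hb]
    rw [rankAll_eq] at hl
    rw [Finset.card_eq_zero.mp hl] at this
    exact absurd this (Finset.notMem_empty k)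
  rcases bts_total x h with hb | hb
  · exact key i j hrj hb
  · exact key j i hri hb

lemma payfilter_card (bs : Fin n → ℝ) (r : ℕ) :
    (Finset.univ.filter fun j => 0 < bs j ∧ rank bs j = r).card ≤ 1 := by
  rw [Finset.card_le_one]
  intro a ha b hb
  simp only [Finset.mem_filter, Finset.mem_univ, true_and] at ha hb
  by_contra h
  have ha2 := ha.2; have hb2 := hb.2
  rcases bts_total bs h with hbt | hbt
  · have := rank_lt ha.1 hb.1 hbt; omega
  · have := rank_lt hb.1 ha.1 hbt; omega

lemma sum_le_of_card_le_one {α : Type*} {F : Finset α} (hc : F.card ≤ 1) {f : α → ℝ}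
    {c : ℝ} (hf : ∀ a ∈ F, f a ≤ c) (h0 : 0 ≤ c) : ∑ a ∈ F, f a ≤ c := by
  rcases F.eq_empty_or_nonempty with rfl | ⟨a, ha⟩
  · simpa using h0
  · have : F = {a} := by
      apply Finset.eq_singleton_iff_unique_mem.mpr
      exact ⟨ha, fun b hb => Finset.card_le_one.mp hc b hb a ha⟩
    rw [this, Finset.sum_singleton]
    exact hf a ha

lemma pay_nonneg {bs : Fin n → ℝ} (i : Fin n) : 0 ≤ pay bs i := by
  apply Finset.sum_nonneg
  intro j hj
  simp only [Finset.mem_filter, Finset.mem_univ, true_and] at hj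
  exact hj.1.le

lemma pay_le {bs : Fin n → ℝ} {i : Fin n} {c : ℝ}
    (h : ∀ j, 0 < bs j → rank bs j = rank bs i + 1 → bs j ≤ c) (hc : 0 ≤ c) :
    pay bs i ≤ c := by
  apply sum_le_of_card_le_one (payfilter_card bs _) _ hc
  intro a ha
  simp only [Finset.mem_filter, Finset.mem_univ, true_and] at ha
  exact h a ha.1 ha.2

lemma exists_winner {bs : Fin n → ℝ} (h : ∃ j, 0 < bs j) :
    ∃ j, 0 < bs j ∧ rank bs j = 0 := by
  classical
  obtain ⟨j, hj⟩ := h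
  set Pos := Finset.univ.filter fun k => 0 < bs k with hPos
  have hjP : j ∈ Pos := by simp [hPos, hj]
  obtain ⟨m, hm, hmax⟩ := Pos.exists_max_image bs ⟨j, hjP⟩
  set T := Pos.filter fun k => bs k = bs m with hT
  have hmT : m ∈ T := by simp [hT, hm]
  set j0 := T.min' ⟨m, hmT⟩ with hj0
  have hj0T : j0 ∈ T := T.min'_mem _
  have hj0P : j0 ∈ Pos := (Finset.mem_filter.mp hj0T).1
  have hj0v : bs j0 = bs m := (Finset.mem_filter.mp hj0T).2
  have hj0pos : 0 < bs j0 := (Finset.mem_filter.mp hj0P).2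
  refine ⟨j0, hj0pos, ?_⟩
  rw [rank_eq, Finset.card_eq_zero]
  rw [Finset.filter_eq_empty_iff]
  intro k _
  rintro ⟨hk, hbt⟩
  have hkP : k ∈ Pos := by simp [hPos, hk]
  rcases hbt with hlt | ⟨he, hl⟩
  · exact absurd (hmax k hkP) (by rw [← hj0v] at *; exact not_le.mpr hlt)
  · have hkT : k ∈ T := by simp [hT, hkP, he.trans hj0v]
    exact absurd (T.min'_le k hkT) (not_le.mpr hl)

lemma second_ge {bs : Fin n → ℝ} (hb0 : ∀ j, 0 ≤ bs j) {i : Fin n} (hi : 0 < bs i)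
    (hr : rank bs i = 0) {j : Fin n} (hj : j ≠ i) : bs j ≤ pay bs i := by
  classical
  by_cases hbj : bs j ≤ 0
  · exact hbj.trans (pay_nonneg i)
  push_neg at hbj
  set O := (Finset.univ.erase i).filter fun k => 0 < bs k with hO
  have hjO : j ∈ O := by simp [hO, hj, hbj]
  obtain ⟨m, hm, hmax⟩ := O.exists_max_image bs ⟨j, hjO⟩
  set T := O.filter fun k => bs k = bs m with hT
  have hmT : m ∈ T := by simp [hT, hm]
  set j1 := T.min' ⟨m, hmT⟩ with hj1
  have hj1T : j1 ∈ T := T.min'_mem _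
  have hj1O : j1 ∈ O := (Finset.mem_filter.mp hj1T).1
  have hj1v : bs j1 = bs m := (Finset.mem_filter.mp hj1T).2
  have hj1pos : 0 < bs j1 := (Finset.mem_filter.mp hj1O).2
  have hj1ne : j1 ≠ i := Finset.ne_of_mem_erase (Finset.mem_of_mem_filter _ hj1O)
  -- rank of j1 is 1
  have hfilt : (Finset.univ.filter fun k => 0 < bs k ∧ bts bs k j1) = {i} := by
    apply Finset.eq_singleton_iff_unique_mem.mpr
    constructor
    · simp only [Finset.mem_filter, Finset.mem_univ, true_and]
      refine ⟨hi, ?_⟩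
      have hnb : ¬ bts bs j1 i := fun hb => rank_zero_not_beaten hr j1 ⟨hj1pos, hb⟩
      rcases bts_total bs (Ne.symm hj1ne) with hb | hb
      · exact hb
      · exact absurd hb hnb
    · intro k hk
      simp only [Finset.mem_filter, Finset.mem_univ, true_and] at hk
      by_contra hki
      have hkO : k ∈ O := by simp [hO, hki, hk.1]
      rcases hk.2 with hlt | ⟨he, hl⟩
      · exact absurd (hmax k hkO) (by rw [← hj1v] at *; exact not_le.mpr hlt)
      · have hkT : k ∈ T := by simp [hT, hkO, he.trans hj1v]
        exact absurd (T.min'_le k hkT) (not_le.mpr hl)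
  have hrank1 : rank bs j1 = 1 := by
    rw [rank_eq, hfilt, Finset.card_singleton]
  -- pay filter is {j1}
  have hpayf : (Finset.univ.filter fun k => 0 < bs k ∧ rank bs k = rank bs i + 1) = {j1} := by
    apply Finset.eq_singleton_iff_unique_mem.mpr
    constructor
    · simp only [Finset.mem_filter, Finset.mem_univ, true_and]
      exact ⟨hj1pos, by rw [hrank1, hr]⟩
    · intro k hk
      apply Finset.card_le_one.mp (payfilter_card bs (rank bs i + 1)) k hk j1
      simp only [Finset.mem_filter, Finset.mem_univ, true_and]
      exact ⟨hj1pos, by rw [hrank1, hr]⟩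
  have : pay bs i = bs j1 := by rw [pay, hpayf, Finset.sum_singleton]
  rw [this, hj1v]
  exact hmax j hjO

end Aux

section Aux2
variable {n : ℕ}

lemma slotW_nonneg (w : ℕ → ℝ) (hw : ∀ k, 0 ≤ w k) (bs : Fin n → ℝ) (i : Fin n) :
    0 ≤ slotW w bs i := by
  unfold slotW; split <;> simp [hw]

lemma slotW_single {w : ℕ → ℝ} (hwk : ∀ k, 1 ≤ k → w k = 0) (bs : Fin n → ℝ) (i : Fin n) :
    slotW w bs i = if 0 < bs i ∧ rank bs i = 0 then w 0 else 0 := by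
  unfold slotW
  by_cases h1 : 0 < bs i
  · by_cases h2 : rank bs i = 0
    · simp [h1, h2]
    · simp [h1, h2, hwk _ (Nat.one_le_iff_ne_zero.mpr h2)]
  · simp [h1]

lemma dev_bound {w : ℕ → ℝ} (hw0 : 0 ≤ w 0) (hwk : ∀ k, 1 ≤ k → w k = 0)
    {bs : Fin n → ℝ} (hbs : ∀ j, 0 ≤ bs j) (i : Fin n) {Vv K : ℝ}
    (hV : 0 ≤ Vv) (hK : 0 ≤ K) (hoth : ∀ j, j ≠ i → bs j ≤ K) :
    max (w 0 * (Vv - K)) 0 ≤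
      slotW w (Function.update bs i Vv) i * (Vv - pay (Function.update bs i Vv) i) := by
  classical
  set bs' := Function.update bs i Vv with hbs'
  have hbsi : bs' i = Vv := Function.update_self i Vv bs
  have hbsj : ∀ j, j ≠ i → bs' j = bs j := fun j hj => Function.update_of_ne hj Vv bs
  by_cases hp : 0 < Vv
  · by_cases hr : rank bs' i = 0
    · have hslot : slotW w bs' i = w 0 := by
        unfold slotW; rw [hbsi, if_pos hp, hr]
      have hpay0 : 0 ≤ pay bs' i := pay_nonneg i
      have hne : ∀ j, 0 < bs' j → rank bs' j = rank bs' i + 1 → j ≠ i := by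
        intro j _ hrj hji
        rw [hji, hr] at hrj; omega
      have hpayK : pay bs' i ≤ K := by
        apply pay_le _ hK
        intro j hj1 hj2
        rw [hbsj j (hne j hj1 hj2)]
        exact hoth j (hne j hj1 hj2)
      have hpayV : pay bs' i ≤ Vv := by
        apply pay_le _ hV
        intro j hj1 hj2
        have hji : j ≠ i := hne j hj1 hj2
        have : ¬ bts bs' j i := fun hb => rank_zero_not_beaten hr j ⟨hj1, hb⟩
        have := bts_total bs' hji
        rcases this with hb | hb
        · exact absurd hb ‹¬ bts bs' j i›
        · exact hbsi ▸ bts_le hb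
      rw [hslot]
      apply max_le
      · exact mul_le_mul_of_nonneg_left (by linarith) hw0
      · exact mul_nonneg hw0 (by linarith)
    · have hslot : slotW w bs' i = 0 := by
        unfold slotW
        rw [hbsi, if_pos hp, hwk _ (Nat.one_le_iff_ne_zero.mpr hr)]
      rw [hslot, zero_mul]
      apply max_le _ le_rfl
      have hVK : Vv ≤ K := by
        rw [rank_eq] at hr
        obtain ⟨j, hjmem⟩ := Finset.card_pos.mp (Nat.pos_of_ne_zero hr)
        simp only [Finset.mem_filter, Finset.mem_univ, true_and] at hjmem
        have hji : j ≠ i := by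
          rintro rfl
          exact bts_irrefl bs' j hjmem.2
        have h1 : bs' i ≤ bs' j := bts_le hjmem.2
        rw [hbsi, hbsj j hji] at h1
        exact h1.trans (hoth j hji)
      exact mul_nonpos_of_nonneg_of_nonpos hw0 (by linarith)
  · have hV0 : Vv = 0 := le_antisymm (not_lt.mp hp) hV
    have hslot : slotW w bs' i = 0 := by
      unfold slotW; rw [hbsi, hV0]; simp
    rw [hslot, zero_mul]
    apply max_le _ le_rfl
    exact mul_nonpos_of_nonneg_of_nonpos hw0 (by linarith)

end Aux2

section Aux3
variable {Q S : Type*} [Fintype Q] [Fintype S]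

lemma mass_nonneg {P : Q → ℝ} {pi : Q → S → ℝ} (hP0 : ∀ q, 0 ≤ P q)
    (hpi0 : ∀ q s, 0 ≤ pi q s) (s : S) : 0 ≤ mass P pi s :=
  Finset.sum_nonneg fun q _ => mul_nonneg (hpi0 q s) (hP0 q)

lemma kwVal_nonneg {P : Q → ℝ} {pi : Q → S → ℝ} {vq : Q → ℝ} (hP0 : ∀ q, 0 ≤ P q)
    (hpi0 : ∀ q s, 0 ≤ pi q s) (hv : ∀ q, 0 ≤ vq q) (s : S) : 0 ≤ kwVal P pi vq s := by
  apply div_nonneg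
  · exact Finset.sum_nonneg fun q _ => mul_nonneg (mul_nonneg (hpi0 q s) (hv q)) (hP0 q)
  · exact mass_nonneg hP0 hpi0 s

lemma mass_mul_kwVal {P : Q → ℝ} {pi : Q → S → ℝ} (hP0 : ∀ q, 0 ≤ P q)
    (hpi0 : ∀ q s, 0 ≤ pi q s) (vq : Q → ℝ) (s : S) :
    mass P pi s * kwVal P pi vq s = ∑ q, pi q s * vq q * P q := by
  by_cases h : mass P pi s = 0
  · have hz : ∀ q ∈ Finset.univ, pi q s * P q = 0 := by
      intro q _
      have := (Finset.sum_eq_zero_iff_of_nonneg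
        (fun q _ => mul_nonneg (hpi0 q s) (hP0 q))).mp h
      exact this q (Finset.mem_univ q)
    rw [h, zero_mul]
    symm
    apply Finset.sum_eq_zero
    intro q hq
    have := hz q hq
    calc pi q s * vq q * P q = vq q * (pi q s * P q) := by ring
    _ = 0 := by rw [this, mul_zero]
  · rw [kwVal, mass] at *
    field_simp

lemma kwVal_zero {P : Q → ℝ} {pi : Q → S → ℝ} {vq : Q → ℝ} (hpi0 : ∀ q s, 0 ≤ pi q s)
    (hv : ∀ q, 0 ≤ vq q) {s : S} (h : ∀ q, ¬ (0 < pi q s ∧ 0 < vq q)) :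
    kwVal P pi vq s = 0 := by
  rw [kwVal]
  convert zero_div _
  apply Finset.sum_eq_zero
  intro q _
  rcases not_and_or.mp (h q) with hc | hc
  · rw [le_antisymm (not_lt.mp hc) (hpi0 q s), zero_mul, zero_mul]
  · rw [le_antisymm (not_lt.mp hc) (hv q), mul_zero, zero_mul]

lemma util_eq {n : ℕ} (P : Q → ℝ) (pi : Q → S → ℝ) (w : ℕ → ℝ)
    (hP0 : ∀ q, 0 ≤ P q) (hpi0 : ∀ q s, 0 ≤ pi q s)
    (v : Fin n → Q → ℝ) (b : Fin n → S → ℝ) (i : Fin n) :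
    util P pi w v b i = ∑ s, mass P pi s * (slotW w (fun j => b j s) i *
      (kwVal P pi (v i) s - pay (fun j => b j s) i)) := by
  unfold util
  simp only [Finset.mul_sum]
  rw [Finset.sum_comm]
  apply Finset.sum_congr rfl
  intro s _
  have : ∀ q, P q * (pi q s * (slotW w (fun j => b j s) i * (v i q - pay (fun j => b j s) i)))
      = slotW w (fun j => b j s) i * (pi q s * v i q * P q)
        - slotW w (fun j => b j s) i * pay (fun j => b j s) i * (pi q s * P q) := by
    intro q; ring
  rw [Finset.sum_congr rfl fun q _ => this q, Finset.sum_sub_distrib,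
    ← Finset.mul_sum, ← Finset.mul_sum, ← mass, ← mass_mul_kwVal hP0 hpi0]
  ring

lemma SW_eq {n : ℕ} (P : Q → ℝ) (pi : Q → S → ℝ) (w : ℕ → ℝ)
    (hP0 : ∀ q, 0 ≤ P q) (hpi0 : ∀ q s, 0 ≤ pi q s)
    (v : Fin n → Q → ℝ) (b : Fin n → S → ℝ) :
    SW P pi w v b = ∑ s, ∑ i, mass P pi s * (slotW w (fun j => b j s) i *
      kwVal P pi (v i) s) := by
  unfold SW
  simp only [Finset.mul_sum]
  rw [Finset.sum_comm]
  apply Finset.sum_congr rfl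
  intro s _
  rw [Finset.sum_comm]
  apply Finset.sum_congr rfl
  intro i _
  have : ∀ q, P q * (pi q s * (slotW w (fun j => b j s) i * v i q))
      = slotW w (fun j => b j s) i * (pi q s * v i q * P q) := by intro q; ring
  rw [Finset.sum_congr rfl fun q _ => this q, ← Finset.mul_sum,
    ← mass_mul_kwVal hP0 hpi0]
  ring

lemma SWtruth_eq {n : ℕ} (P : Q → ℝ) (pi : Q → S → ℝ) (w : ℕ → ℝ)
    (v : Fin n → Q → ℝ) :
    SWtruth P pi w v = ∑ s, ∑ i,
      w (rankAll (fun j => kwVal P pi (v j) s) i) * (mass P pi s * kwVal P pi (v i) s) := by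
  unfold SWtruth
  simp only [Finset.mul_sum]
  rw [Finset.sum_comm]
  apply Finset.sum_congr rfl
  intro s _
  rw [Finset.sum_comm]
  apply Finset.sum_congr rfl
  intro i _
  rw [mass, Finset.sum_mul, Finset.mul_sum]
  apply Finset.sum_congr rfl
  intro q _
  ring

lemma exists_top_subset {α : Type*} [DecidableEq α] (g : α → ℝ) :
    ∀ (F : Finset α), (∀ s ∈ F, 0 ≤ g s) → ∀ k, k ≤ F.card →
      ∃ D ⊆ F, D.card = k ∧ (k : ℝ) * ∑ s ∈ F, g s ≤ (F.card : ℝ) * ∑ s ∈ D, g s := by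
  intro F
  induction F using Finset.strongInduction with
  | _ F ih =>
    intro hg k hk
    by_cases hkF : k = F.card
    · exact ⟨F, Finset.Subset.refl F, hkF.symm, by rw [hkF]⟩
    · have hklt : k < F.card := lt_of_le_of_ne hk hkF
      have hFne : F.Nonempty := Finset.card_pos.mp (by omega)
      obtain ⟨m, hm, hmin⟩ := F.exists_min_image g hFne
      have hsub : F.erase m ⊂ F := Finset.erase_ssubset hm
      have hcard : (F.erase m).card = F.card - 1 := Finset.card_erase_of_mem hm
      have hk' : k ≤ (F.erase m).card := by omega
      obtain ⟨D, hDF, hDc, hineq⟩ := ih (F.erase m) hsub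
        (fun s hs => hg s (Finset.mem_of_mem_erase hs)) k hk'
      refine ⟨D, hDF.trans (Finset.erase_subset m F), hDc, ?_⟩
      have hsum : ∑ s ∈ F, g s = g m + ∑ s ∈ F.erase m, g s :=
        (Finset.add_sum_erase F g hm).symm
      have hgm : (k : ℝ) * g m ≤ ∑ s ∈ D, g s := by
        have : ∀ s ∈ D, g m ≤ g s := fun s hs =>
          hmin s (Finset.mem_of_mem_erase (hDF hs))
        calc (k : ℝ) * g m = ∑ _s ∈ D, g m := by rw [Finset.sum_const, hDc]; ring
        _ ≤ ∑ s ∈ D, g s := Finset.sum_le_sum this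
      have hFc : (F.card : ℝ) = ((F.erase m).card : ℝ) + 1 := by
        rw [hcard]
        have : 1 ≤ F.card := Finset.card_pos.mpr hFne
        push_cast [Nat.cast_sub this]
        ring
      calc (k : ℝ) * ∑ s ∈ F, g s = (k : ℝ) * g m + (k : ℝ) * ∑ s ∈ F.erase m, g s := by
            rw [hsum]; ring
      _ ≤ ∑ s ∈ D, g s + ((F.erase m).card : ℝ) * ∑ s ∈ D, g s := add_le_add hgm hineq
      _ = (F.card : ℝ) * ∑ s ∈ D, g s := by rw [hFc]; ring

end Aux3

end PBM

open PBM in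
/-- full-information single slot: if the auction system is
`β`-KL-expressive then for every conservative pure Nash equilibrium `b`,
`SW(𝔳) ≤ (1/β)·SW(b)` where `𝔳` is the truthful keyword-bid profile. -/
theorem stmt10
    {Q S : Type*} [Fintype Q] [Fintype S] {n : ℕ}
    (P : Q → ℝ) (pi : Q → S → ℝ) (w : ℕ → ℝ) (κ : ℕ)
    (hP0 : ∀ q, 0 ≤ P q) (hP1 : ∑ q, P q = 1)
    (hpi0 : ∀ q s, 0 ≤ pi q s) (hpi1 : ∀ q, ∑ s, pi q s = 1)
    (hS : ∀ s : S, ∃ q, 0 < pi q s)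
    (hw0 : ∀ k, 0 ≤ w k) (hκ : 0 < κ)
    (hw1 : 0 < w 0) (hwk : ∀ k, 1 ≤ k → w k = 0)
    (β : ℝ) (hβ : 0 < β) (hβ1 : β ≤ 1)
    (v : Fin n → Q → ℝ) (hv0 : ∀ i q, 0 ≤ v i q)
    (hKL : KLExpressive pi v κ β)
    (b : Fin n → S → ℝ)
    (hvalid : ∀ i, ValidBid κ (b i))
    (hcons : Conservative P pi v b)
    (hNE : ∀ (i : Fin n) (b' : S → ℝ), ValidBid κ b' →
      util P pi w v (Function.update b i b') i ≤ util P pi w v b i) :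
    SWtruth P pi w v ≤ (1 / β) * SW P pi w v b := by
  classical
  have hμ0 : ∀ s, 0 ≤ mass P pi s := fun s => mass_nonneg hP0 hpi0 s
  have hV0 : ∀ (i : Fin n) s, 0 ≤ kwVal P pi (v i) s :=
    fun i s => kwVal_nonneg hP0 hpi0 (hv0 i) s
  have hb0 : ∀ (j : Fin n) s, 0 ≤ b j s := fun j s => (hvalid j).1 s
  set win : Fin n → S → Prop := fun i s => 0 < b i s ∧ rank (fun j => b j s) i = 0
    with hwindef
  set K : S → Fin n → ℝ := fun s i =>
    (insert (0:ℝ) ((Finset.univ.erase i).image fun j => b j s)).max'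
      (Finset.insert_nonempty _ _) with hKdef
  have hK0 : ∀ s i, 0 ≤ K s i := by
    intro s i
    apply Finset.le_max'
    exact Finset.mem_insert_self _ _
  have hKoth : ∀ s (i j : Fin n), j ≠ i → b j s ≤ K s i := by
    intro s i j hj
    apply Finset.le_max'
    exact Finset.mem_insert_of_mem (Finset.mem_image_of_mem _ (Finset.mem_erase.mpr
      ⟨hj, Finset.mem_univ j⟩))
  have hKmem : ∀ s (i : Fin n), K s i = 0 ∨ ∃ j, j ≠ i ∧ K s i = b j s := by
    intro s i
    have := Finset.max'_mem (insert (0:ℝ) ((Finset.univ.erase i).image fun j => b j s))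
      (Finset.insert_nonempty _ _)
    rcases Finset.mem_insert.mp this with h | h
    · exact Or.inl h
    · obtain ⟨j, hj, hjv⟩ := Finset.mem_image.mp h
      exact Or.inr ⟨j, (Finset.mem_erase.mp hj).1, hjv.symm⟩
  set g : Fin n → S → ℝ := fun i s =>
    w 0 * (mass P pi s * (kwVal P pi (v i) s - K s i)) with hgdef
  set gp : Fin n → S → ℝ := fun i s => max (g i s) 0 with hgpdef
  have hgp0 : ∀ i s, 0 ≤ gp i s := fun i s => le_max_right _ _
  -- winner's payment is at most his bid
  have hwinpay : ∀ (i : Fin n) s, win i s → pay (fun j => b j s) i ≤ b i s := by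
    intro i s hwin
    apply pay_le _ (hb0 i s)
    intro j hj hrj
    have hnb := rank_zero_not_beaten hwin.2 j
    by_contra hlt
    exact hnb ⟨hj, Or.inl (lt_of_not_ge hlt)⟩
  -- winner's payment equals K
  have hKpay : ∀ (i : Fin n) s, win i s → K s i = pay (fun j => b j s) i := by
    intro i s hwin
    apply le_antisymm
    · apply Finset.max'_le
      intro y hy
      rcases Finset.mem_insert.mp hy with rfl | hy
      · exact pay_nonneg i
      · obtain ⟨j, hj, rfl⟩ := Finset.mem_image.mp hy
        exact second_ge (fun k => hb0 k s) hwin.1 hwin.2 (Finset.mem_erase.mp hj).1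
    · apply pay_le _ (hK0 s i)
      intro j hj hrj
      have hji : j ≠ i := by
        intro h; rw [h, hwin.2] at hrj; omega
      exact hKoth s i j hji
  -- utility rewritten over winning keywords
  have hu_eq : ∀ i : Fin n, util P pi w v b i =
      ∑ s, (if win i s then w 0 * (mass P pi s *
        (kwVal P pi (v i) s - pay (fun j => b j s) i)) else 0) := by
    intro i
    rw [util_eq P pi w hP0 hpi0 v b i]
    apply Finset.sum_congr rfl
    intro s _
    rw [slotW_single hwk]
    by_cases h : win i s
    · rw [if_pos h, if_pos h]; ring
    · rw [if_neg h, if_neg h]; ring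
  have hterm_nonneg : ∀ (i : Fin n) s, (0:ℝ) ≤
      (if win i s then w 0 * (mass P pi s *
        (kwVal P pi (v i) s - pay (fun j => b j s) i)) else 0) := by
    intro i s
    by_cases h : win i s
    · rw [if_pos h]
      have h1 : pay (fun j => b j s) i ≤ kwVal P pi (v i) s :=
        (hwinpay i s h).trans (hcons i s)
      have := mul_nonneg (hμ0 s) (sub_nonneg.mpr h1)
      exact mul_nonneg (hw0 0) this
    · rw [if_neg h]
  have hu_nonneg : ∀ i : Fin n, 0 ≤ util P pi w v b i := by
    intro i
    rw [hu_eq i]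
    exact Finset.sum_nonneg fun s _ => hterm_nonneg i s
  -- utility term equals g on winning keywords, hence utility below sum of gp over wins
  have hu_le_gp : ∀ i : Fin n, util P pi w v b i ≤
      ∑ s ∈ Finset.univ.filter (fun s => win i s), gp i s := by
    intro i
    rw [hu_eq i, ← Finset.sum_filter]
    apply Finset.sum_le_sum
    intro s hs
    have hwin : win i s := (Finset.mem_filter.mp hs).2
    have : w 0 * (mass P pi s * (kwVal P pi (v i) s - pay (fun j => b j s) i)) = g i s := by
      simp only [hgpdef, hgdef]
      rw [hKpay i s hwin]
    rw [this]
    exact le_max_left _ _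
  -- social welfare rewritten
  have hSW : SW P pi w v b =
      ∑ s, ∑ i, (if win i s then w 0 * (mass P pi s * kwVal P pi (v i) s) else 0) := by
    rw [SW_eq P pi w hP0 hpi0 v b]
    apply Finset.sum_congr rfl
    intro s _
    apply Finset.sum_congr rfl
    intro i _
    rw [slotW_single hwk]
    by_cases h : win i s
    · rw [if_pos h, if_pos h]; ring
    · rw [if_neg h, if_neg h]; ring
  have hSWb_nonneg : ∀ s (i : Fin n),
      (0:ℝ) ≤ (if win i s then w 0 * (mass P pi s * kwVal P pi (v i) s) else 0) := by
    intro s i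
    by_cases h : win i s
    · rw [if_pos h]
      exact mul_nonneg (hw0 0) (mul_nonneg (hμ0 s) (hV0 i s))
    · rw [if_neg h]
  -- K is below the winner's value
  have hKbound : ∀ s (i0 : Fin n), K s i0 ≤
      ∑ j, (if win j s then kwVal P pi (v j) s else 0) := by
    intro s i0
    have hWS0 : (0:ℝ) ≤ ∑ j, (if win j s then kwVal P pi (v j) s else 0) := by
      apply Finset.sum_nonneg
      intro j _
      by_cases h : win j s
      · rw [if_pos h]; exact hV0 j s
      · rw [if_neg h]
    rcases hKmem s i0 with h | ⟨j, hji, hjv⟩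
    · rw [h]; exact hWS0
    · rw [hjv]
      by_cases hbj : b j s ≤ 0
      · exact hbj.trans hWS0
      · push_neg at hbj
        obtain ⟨j0, hj0p, hj0r⟩ := exists_winner (bs := fun k => b k s) ⟨j, hbj⟩
        have hwj0 : win j0 s := ⟨hj0p, hj0r⟩
        have h1 : b j s ≤ b j0 s := rank_zero_max hj0r hbj
        have h2 : b j0 s ≤ kwVal P pi (v j0) s := hcons j0 s
        have h3 : kwVal P pi (v j0) s ≤
            ∑ k, (if win k s then kwVal P pi (v k) s else 0) := by
          have := Finset.single_le_sum (f := fun k =>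
            (if win k s then kwVal P pi (v k) s else 0))
            (fun k _ => by
              by_cases h : win k s
              · simp only [if_pos h]; exact hV0 k s
              · simp only [if_neg h]; exact le_rfl) (Finset.mem_univ j0)
          simpa only [if_pos hwj0] using this
        linarith
  -- Nash equilibrium: deviation to any set of at most κ keywords
  have hdev : ∀ (i : Fin n) (D : Finset S), D.card ≤ κ →
      ∑ s ∈ D, gp i s ≤ util P pi w v b i := by
    intro i D hD
    set b' : S → ℝ := fun s => if s ∈ D then kwVal P pi (v i) s else 0 with hb'def
    have hvb' : ValidBid κ b' := by
      constructor
      · intro s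
        simp only [hb'def]
        by_cases h : s ∈ D
        · simp only [if_pos h]; exact hV0 i s
        · simp only [if_neg h]; exact le_rfl
      · apply le_trans _ hD
        apply Finset.card_le_card
        intro s hs
        have := (Finset.mem_filter.mp hs).2
        by_contra hsD
        simp only [hb'def, if_neg hsD] at this
        exact lt_irrefl 0 this
    have hne := hNE i b' hvb'
    rw [util_eq P pi w hP0 hpi0 v (Function.update b i b') i] at hne
    have hlow : ∀ s, (if s ∈ D then gp i s else 0) ≤
        mass P pi s * (slotW w (fun j => Function.update b i b' j s) i *
          (kwVal P pi (v i) s - pay (fun j => Function.update b i b' j s) i)) := by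
      intro s
      by_cases hsD : s ∈ D
      · rw [if_pos hsD]
        have hfun : (fun j => Function.update b i b' j s) =
            Function.update (fun j => b j s) i (kwVal P pi (v i) s) := by
          funext j
          by_cases hj : j = i
          · subst hj
            simp only [Function.update_self, hb'def, if_pos hsD]
          · rw [Function.update_of_ne hj, Function.update_of_ne hj]
        rw [hfun]
        have hdb := dev_bound (hw0 0) hwk (fun j => hb0 j s) i (hV0 i s) (hK0 s i)
          (fun j hj => hKoth s i j hj)
        calc gp i s = mass P pi s * max (w 0 * (kwVal P pi (v i) s - K s i)) 0 := by
              simp only [hgpdef, hgdef]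
              rw [mul_max_of_nonneg _ _ (hμ0 s), mul_zero]
              congr 1
              ring
        _ ≤ _ := mul_le_mul_of_nonneg_left hdb (hμ0 s)
      · rw [if_neg hsD]
        have hbz : Function.update b i b' i s = 0 := by
          simp only [Function.update_self, hb'def, if_neg hsD]
        have hslot : slotW w (fun j => Function.update b i b' j s) i = 0 := by
          unfold slotW
          simp only [hbz, lt_self_iff_false, if_false]
        rw [hslot, zero_mul, mul_zero]
    calc ∑ s ∈ D, gp i s = ∑ s, (if s ∈ D then gp i s else 0) := by
          rw [Finset.sum_ite_mem, Finset.univ_inter]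
    _ ≤ ∑ s, mass P pi s * (slotW w (fun j => Function.update b i b' j s) i *
          (kwVal P pi (v i) s - pay (fun j => Function.update b i b' j s) i)) :=
        Finset.sum_le_sum fun s _ => hlow s
    _ ≤ util P pi w v b i := hne
  -- relevant keyword sets
  set Si : Fin n → Finset S := fun i =>
    Finset.univ.filter (fun s => ∃ q, 0 < pi q s ∧ 0 < v i q) with hSidef
  have hgp_zero : ∀ (i : Fin n) s, s ∉ Si i → gp i s = 0 := by
    intro i s hs
    have hVz : kwVal P pi (v i) s = 0 := by
      apply kwVal_zero hpi0 (hv0 i)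
      intro q hq
      exact hs (Finset.mem_filter.mpr ⟨Finset.mem_univ s, ⟨q, hq⟩⟩)
    simp only [hgpdef, hgdef]
    rw [hVz]
    apply max_eq_right
    have : mass P pi s * (0 - K s i) ≤ 0 :=
      mul_nonpos_of_nonneg_of_nonpos (hμ0 s) (by linarith [hK0 s i])
    exact mul_nonpos_of_nonneg_of_nonpos (hw0 0) this
  -- NE consequence with expressiveness
  have hNEb : ∀ i : Fin n, β * ∑ s ∈ Si i, gp i s ≤ util P pi w v b i := by
    intro i
    have hgpnn : ∀ s ∈ Si i, 0 ≤ gp i s := fun s _ => hgp0 i s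
    have hsum0 : 0 ≤ ∑ s ∈ Si i, gp i s := Finset.sum_nonneg hgpnn
    by_cases hFκ : (Si i).card ≤ κ
    · have h1 := hdev i (Si i) hFκ
      nlinarith [hu_nonneg i]
    · push_neg at hFκ
      obtain ⟨D, hDF, hDc, hineq⟩ := exists_top_subset (gp i) (Si i) hgpnn κ hFκ.le
      have h1 := hdev i D (le_of_eq hDc)
      have h2 := hKL i
      have h3 : ((Si i).card : ℝ) * ∑ s ∈ D, gp i s ≤
          ((Si i).card : ℝ) * util P pi w v b i :=
        mul_le_mul_of_nonneg_left h1 (Nat.cast_nonneg _)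
      have h4 : (κ : ℝ) * ∑ s ∈ Si i, gp i s ≤
          ((Si i).card : ℝ) * util P pi w v b i := le_trans hineq h3
      have hκR : (0:ℝ) < (κ:ℝ) := Nat.cast_pos.mpr hκ
      nlinarith [hu_nonneg i, mul_le_mul_of_nonneg_right h2 (hu_nonneg i),
        mul_le_mul_of_nonneg_left h4 hβ.le]
  -- the "loss" keywords
  set Ind : Fin n → Finset S := fun i => Finset.univ.filter
    (fun s => rankAll (fun j => kwVal P pi (v j) s) i = 0 ∧ ¬ win i s) with hInddef
  -- refined NE bound
  have hXbound : ∀ i : Fin n, β * (util P pi w v b i + ∑ s ∈ Ind i, gp i s) ≤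
      util P pi w v b i := by
    intro i
    have hkey : util P pi w v b i + ∑ s ∈ Ind i, gp i s ≤ ∑ s ∈ Si i, gp i s := by
      have hX2 : ∑ s ∈ Ind i, gp i s = ∑ s ∈ Ind i ∩ Si i, gp i s := by
        rw [← Finset.sum_inter_add_sum_sdiff (Ind i) (Si i) (gp i)]
        have : ∑ s ∈ Ind i \ Si i, gp i s = 0 := by
          apply Finset.sum_eq_zero
          intro s hs
          exact hgp_zero i s (Finset.mem_sdiff.mp hs).2
        rw [this, add_zero]
      have hWsub : Finset.univ.filter (fun s => win i s) ⊆ Si i := by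
        intro s hs
        have hwin : win i s := (Finset.mem_filter.mp hs).2
        have hVpos : 0 < kwVal P pi (v i) s := lt_of_lt_of_le hwin.1 (hcons i s)
        by_contra hnot
        have := kwVal_zero (P := P) hpi0 (hv0 i) (s := s) (fun q hq =>
          hnot (Finset.mem_filter.mpr ⟨Finset.mem_univ s, ⟨q, hq⟩⟩))
        rw [this] at hVpos
        exact lt_irrefl 0 hVpos
      have hIsub : Ind i ∩ Si i ⊆ Si i := Finset.inter_subset_right
      have hdisj : Disjoint (Finset.univ.filter (fun s => win i s)) (Ind i ∩ Si i) := by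
        rw [Finset.disjoint_left]
        intro s hs1 hs2
        have h1 : win i s := (Finset.mem_filter.mp hs1).2
        have h2 := (Finset.mem_filter.mp (Finset.mem_of_mem_inter_left hs2)).2
        exact h2.2 h1
      calc util P pi w v b i + ∑ s ∈ Ind i, gp i s ≤
          ∑ s ∈ Finset.univ.filter (fun s => win i s), gp i s
            + ∑ s ∈ Ind i ∩ Si i, gp i s := by
            rw [hX2]
            exact add_le_add_left (hu_le_gp i) _
      _ = ∑ s ∈ Finset.univ.filter (fun s => win i s) ∪ (Ind i ∩ Si i), gp i s :=
            (Finset.sum_union hdisj).symm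
      _ ≤ ∑ s ∈ Si i, gp i s := by
            apply Finset.sum_le_sum_of_subset_of_nonneg
            · exact Finset.union_subset hWsub hIsub
            · intro s _ _; exact hgp0 i s
    calc β * (util P pi w v b i + ∑ s ∈ Ind i, gp i s) ≤ β * ∑ s ∈ Si i, gp i s :=
          mul_le_mul_of_nonneg_left hkey hβ.le
    _ ≤ util P pi w v b i := hNEb i
  -- per-keyword welfare bound
  have hperS : ∀ s, (∑ i, w (rankAll (fun j => kwVal P pi (v j) s) i)
        * (mass P pi s * kwVal P pi (v i) s)) ≤
      (∑ i, if win i s then w 0 * (mass P pi s * kwVal P pi (v i) s) else 0)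
      + ∑ i, (if rankAll (fun j => kwVal P pi (v j) s) i = 0 ∧ ¬ win i s
          then gp i s else 0) := by
    intro s
    set x : Fin n → ℝ := fun j => kwVal P pi (v j) s with hxdef
    have hind_nonneg : ∀ i : Fin n, (0:ℝ) ≤
        (if rankAll x i = 0 ∧ ¬ win i s then gp i s else 0) := by
      intro i
      by_cases h : rankAll x i = 0 ∧ ¬ win i s
      · rw [if_pos h]; exact hgp0 i s
      · rw [if_neg h]
    by_cases hex : ∃ i0 : Fin n, rankAll x i0 = 0
    · obtain ⟨i0, hi0⟩ := hex
      have hLHS : (∑ i, w (rankAll x i) * (mass P pi s * kwVal P pi (v i) s))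
          = w 0 * (mass P pi s * kwVal P pi (v i0) s) := by
        rw [Finset.sum_eq_single i0]
        · rw [hi0]
        · intro j _ hj
          have : rankAll x j ≠ 0 := fun h => hj (rankAll_zero_unique h hi0)
          rw [hwk _ (Nat.one_le_iff_ne_zero.mpr this), zero_mul]
        · intro h; exact absurd (Finset.mem_univ i0) h
      rw [hLHS]
      by_cases hwi : win i0 s
      · have h1 : w 0 * (mass P pi s * kwVal P pi (v i0) s) ≤
            ∑ i, (if win i s then w 0 * (mass P pi s * kwVal P pi (v i) s) else 0) := by
          have := Finset.single_le_sum (f := fun i =>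
            (if win i s then w 0 * (mass P pi s * kwVal P pi (v i) s) else 0))
            (fun i _ => hSWb_nonneg s i) (Finset.mem_univ i0)
          simpa only [if_pos hwi] using this
        have h2 : (0:ℝ) ≤ ∑ i, (if rankAll x i = 0 ∧ ¬ win i s then gp i s else 0) :=
          Finset.sum_nonneg fun i _ => hind_nonneg i
        linarith
      · have h2 : gp i0 s ≤
            ∑ i, (if rankAll x i = 0 ∧ ¬ win i s then gp i s else 0) := by
          have := Finset.single_le_sum (f := fun i =>
            (if rankAll x i = 0 ∧ ¬ win i s then gp i s else 0))
            (fun i _ => hind_nonneg i) (Finset.mem_univ i0)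
          simpa only [if_pos (show rankAll x i0 = 0 ∧ ¬ win i0 s from ⟨hi0, hwi⟩)] using this
        have hfirst : (∑ i, if win i s then w 0 * (mass P pi s * kwVal P pi (v i) s) else 0)
            = w 0 * (mass P pi s * ∑ j, (if win j s then kwVal P pi (v j) s else 0)) := by
          rw [Finset.mul_sum, Finset.mul_sum]
          apply Finset.sum_congr rfl
          intro j _
          by_cases h : win j s
          · simp only [if_pos h]
          · simp only [if_neg h, mul_zero]
        rw [hfirst]
        have h3 := hKbound s i0
        have h4 : w 0 * (mass P pi s * K s i0) ≤
            w 0 * (mass P pi s * ∑ j, (if win j s then kwVal P pi (v j) s else 0)) := by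
          apply mul_le_mul_of_nonneg_left _ (hw0 0)
          exact mul_le_mul_of_nonneg_left h3 (hμ0 s)
        have h5 : g i0 s ≤ gp i0 s := le_max_left _ _
        have h6 : g i0 s = w 0 * (mass P pi s * (kwVal P pi (v i0) s - K s i0)) := by
          simp only [hgdef]
        have h7 : w 0 * (mass P pi s * kwVal P pi (v i0) s) =
            w 0 * (mass P pi s * (kwVal P pi (v i0) s - K s i0))
            + w 0 * (mass P pi s * K s i0) := by ring
        linarith
    · push_neg at hex
      have hLHS : (∑ i, w (rankAll x i) * (mass P pi s * kwVal P pi (v i) s)) = 0 := by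
        apply Finset.sum_eq_zero
        intro i _
        rw [hwk _ (Nat.one_le_iff_ne_zero.mpr (hex i)), zero_mul]
      rw [hLHS]
      have h1 : (0:ℝ) ≤ ∑ i, (if win i s then w 0 * (mass P pi s * kwVal P pi (v i) s) else 0) :=
        Finset.sum_nonneg fun i _ => hSWb_nonneg s i
      have h2 : (0:ℝ) ≤ ∑ i, (if rankAll x i = 0 ∧ ¬ win i s then gp i s else 0) :=
        Finset.sum_nonneg fun i _ => hind_nonneg i
      linarith
  -- sum utilities below social welfare
  have hsumu : ∑ i, util P pi w v b i ≤ SW P pi w v b := by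
    rw [hSW, Finset.sum_comm]
    apply Finset.sum_le_sum
    intro i _
    rw [hu_eq i]
    apply Finset.sum_le_sum
    intro s _
    by_cases h : win i s
    · rw [if_pos h, if_pos h]
      apply mul_le_mul_of_nonneg_left _ (hw0 0)
      apply mul_le_mul_of_nonneg_left _ (hμ0 s)
      linarith [pay_nonneg (bs := fun j => b j s) i]
    · rw [if_neg h, if_neg h]
  -- global bound
  have hmain : SWtruth P pi w v ≤ SW P pi w v b + ∑ i, ∑ s ∈ Ind i, gp i s := by
    have h1 : SWtruth P pi w v ≤
        (∑ s, ∑ i, if win i s then w 0 * (mass P pi s * kwVal P pi (v i) s) else 0)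
        + ∑ s, ∑ i, (if rankAll (fun j => kwVal P pi (v j) s) i = 0 ∧ ¬ win i s
            then gp i s else 0) := by
      rw [SWtruth_eq P pi w v, ← Finset.sum_add_distrib]
      exact Finset.sum_le_sum fun s _ => hperS s
    have h2 : ∑ s, ∑ i, (if rankAll (fun j => kwVal P pi (v j) s) i = 0 ∧ ¬ win i s
        then gp i s else 0) = ∑ i, ∑ s ∈ Ind i, gp i s := by
      rw [Finset.sum_comm]
      apply Finset.sum_congr rfl
      intro i _
      rw [hInddef, Finset.sum_filter]
    rw [← hSW] at h1
    rw [h2] at h1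
    exact h1
  -- final algebra
  have hT0 : 0 ≤ ∑ i, ∑ s ∈ Ind i, gp i s :=
    Finset.sum_nonneg fun i _ => Finset.sum_nonneg fun s _ => hgp0 i s
  have hU0 : 0 ≤ ∑ i, util P pi w v b i := Finset.sum_nonneg fun i _ => hu_nonneg i
  have hsumX : β * (∑ i, util P pi w v b i + ∑ i, ∑ s ∈ Ind i, gp i s) ≤
      ∑ i, util P pi w v b i := by
    rw [← Finset.sum_add_distrib, Finset.mul_sum]
    exact Finset.sum_le_sum fun i _ => hXbound i
  have hfin : β * SWtruth P pi w v ≤ SW P pi w v b := by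
    nlinarith [hmain, hsumX, hsumu, hT0, hU0]
  rw [one_div, ← div_eq_inv_mul, le_div_iff₀ hβ]
  linarith [hfin]
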